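/- arXiv:1909.12076 — 5 statements merged into one kernel-verified Lean document; each statement's English description precedes it below -/
import Mathlib

section
/- For every real t with -p < t < p (p a positive real), the series ∑_{j ∈ ℤ, j ≠ 0} 1/((2pj - t)² - p²) converges and equals 1/(p² - t²). -/
open Filter Finset

/-- Telescoping sum: if `d → 0` and `d` is antitone (stepwise), then
`∑ (d n - d (n+1)) = d 0`. -/
lemma telescope_hasSum (d : ℕ → ℝ) (h0 : Tendsto d atTop (nhds 0))
    (hmono : ∀ n, d (n + 1) ≤ d n) :
    HasSum (fun n => d n - d (n + 1)) (d 0) := by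
  rw [hasSum_iff_tendsto_nat_of_nonneg (fun n => sub_nonneg.2 (hmono n))]
  have : (fun n : ℕ => ∑ i ∈ Finset.range n, (d i - d (i + 1)))
      = fun n : ℕ => d 0 - d n := by
    funext n; exact Finset.sum_range_sub' d n
  rw [this]
  simpa using tendsto_const_nhds.sub h0

/-- One-sided telescoping evaluation. -/
lemma one_side (p s : ℝ) (hp : 0 < p) (hs : s < p) :
    HasSum (fun n : ℕ => 1 / ((2 * p * ((n : ℝ) + 1) - s) ^ 2 - p ^ 2))
      (1 / (2 * p) * (1 / (p - s))) := by
  set d : ℕ → ℝ := fun n => 1 / (2 * p) * (1 / (2 * p * (n : ℝ) + (p - s))) with hd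
  have hden : ∀ n : ℕ, 0 < 2 * p * (n : ℝ) + (p - s) := by
    intro n
    have : (0:ℝ) ≤ (n:ℝ) := Nat.cast_nonneg n
    nlinarith
  have h0 : Tendsto d atTop (nhds 0) := by
    have h1 : Tendsto (fun n : ℕ => 2 * p * (n : ℝ) + (p - s)) atTop atTop := by
      apply tendsto_atTop_add_const_right
      exact (tendsto_natCast_atTop_atTop (R := ℝ)).const_mul_atTop (by positivity)
    have h2 : Tendsto (fun n : ℕ => (2 * p * (n : ℝ) + (p - s))⁻¹) atTop (nhds 0) :=
      h1.inv_tendsto_atTop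
    have : d = fun n : ℕ => 1 / (2 * p) * (2 * p * (n : ℝ) + (p - s))⁻¹ := by
      funext n; simp [hd, one_div]
    rw [this]
    simpa using h2.const_mul (1 / (2 * p))
  have hmono : ∀ n, d (n + 1) ≤ d n := by
    intro n
    have h1 := hden n
    have h2 := hden (n + 1)
    apply mul_le_mul_of_nonneg_left _ (by positivity : (0:ℝ) ≤ 1 / (2 * p))
    apply one_div_le_one_div_of_le h1
    push_cast
    nlinarith
  have key := telescope_hasSum d h0 hmono
  have heq : (fun n : ℕ => 1 / ((2 * p * ((n : ℝ) + 1) - s) ^ 2 - p ^ 2))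
      = fun n => d n - d (n + 1) := by
    funext n
    have h1 := hden n
    have h2 := hden (n + 1)
    have h2' : 2 * p * ((n : ℝ) + 1) + (p - s) > 0 := by push_cast at h2 ⊢; linarith
    simp only [hd]
    have hne1 : 2 * p * (n : ℝ) + (p - s) ≠ 0 := ne_of_gt h1
    have hne2 : 2 * p * ((n : ℝ) + 1) + (p - s) ≠ 0 := ne_of_gt h2'
    have hfac : (2 * p * ((n : ℝ) + 1) - s) ^ 2 - p ^ 2
        = (2 * p * (n : ℝ) + (p - s)) * (2 * p * ((n : ℝ) + 1) + (p - s)) := by ring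
    rw [hfac]
    push_cast
    field_simp
    ring
  rw [heq]
  have : d 0 = 1 / (2 * p) * (1 / (p - s)) := by simp [hd]
  rw [← this]
  exact key

/-- For `p > 0` and `t ∈ (-p, p)`, `∑_{j ≠ 0} 1/((2pj - t)² - p²) = 1/(p² - t²)`. -/
theorem stmt1 (p t : ℝ) (hp : 0 < p) (ht : t ∈ Set.Ioo (-p) p) :
    HasSum (fun j : {j : ℤ // j ≠ 0} =>
        1 / ((2 * p * ((j : ℤ) : ℝ) - t) ^ 2 - p ^ 2))
      (1 / (p ^ 2 - t ^ 2)) := by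
  obtain ⟨ht1, ht2⟩ := ht
  set g : ℤ → ℝ := fun j => if j = 0 then 0 else 1 / ((2 * p * (j : ℝ) - t) ^ 2 - p ^ 2)
    with hg
  -- positive part
  have hpos : HasSum (fun n : ℕ => g n)
      (1 / (2 * p) * (1 / (p - t))) := by
    have h1 := one_side p t hp ht2
    have h2 : (fun n : ℕ => 1 / ((2 * p * ((n : ℝ) + 1) - t) ^ 2 - p ^ 2))
        = fun n : ℕ => g ((n : ℤ) + 1) := by
      funext n
      have : ((n : ℤ) + 1) ≠ 0 := by positivity
      rw [hg]
      simp only [this, if_neg this]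
      push_cast
      ring_nf
    rw [h2] at h1
    have h3 : (fun n : ℕ => g ((n : ℤ) + 1)) = fun n : ℕ => (fun m : ℕ => g m) (n + 1) := by
      funext n; push_cast; ring_nf
    rw [h3] at h1
    have := (hasSum_nat_add_iff (f := fun m : ℕ => g m) 1).mp h1
    simpa [hg] using this
  -- negative part
  have hneg : HasSum (fun n : ℕ => g (-((n : ℤ) + 1)))
      (1 / (2 * p) * (1 / (p + t))) := by
    have h1 := one_side p (-t) hp (by linarith)
    have h2 : (fun n : ℕ => 1 / ((2 * p * ((n : ℝ) + 1) - (-t)) ^ 2 - p ^ 2))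
        = fun n : ℕ => g (-((n : ℤ) + 1)) := by
      funext n
      have hne : -((n : ℤ) + 1) ≠ 0 := by
        have : (0:ℤ) < (n : ℤ) + 1 := by positivity
        omega
      simp only [hg, hne, if_neg hne]
      push_cast
      ring_nf
    rw [h2] at h1
    have : p + t = p - (-t) := by ring
    rw [this]
    exact h1
  have htot : HasSum g (1 / (p ^ 2 - t ^ 2)) := by
    have h := hpos.of_nat_of_neg_add_one hneg
    have hval : 1 / (2 * p) * (1 / (p - t)) + 1 / (2 * p) * (1 / (p + t))
        = 1 / (p ^ 2 - t ^ 2) := by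
      have h1 : p - t ≠ 0 := ne_of_gt (by linarith)
      have h2 : p + t ≠ 0 := ne_of_gt (by linarith)
      have h3 : p ≠ 0 := ne_of_gt hp
      have h4 : p ^ 2 - t ^ 2 ≠ 0 := by
        have : p ^ 2 - t ^ 2 = (p - t) * (p + t) := by ring
        rw [this]; exact mul_ne_zero h1 h2
      field_simp
      ring
    rwa [hval] at h
  have hsupp : Function.support g ⊆ {j : ℤ | j ≠ 0} := by
    intro j hj
    simp only [Function.mem_support, hg] at hj
    intro h0
    exact hj (by simp [h0])
  have := (hasSum_subtype_iff_of_support_subset hsupp).mpr htot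
  have heq : (fun j : {j : ℤ // j ≠ 0} =>
      1 / ((2 * p * ((j : ℤ) : ℝ) - t) ^ 2 - p ^ 2))
      = (g ∘ (fun j : ({j : ℤ | j ≠ 0} : Set ℤ) => (j : ℤ))) := by
    funext j
    simp [hg, j.2]
  rw [heq]
  exact this
end

section
/- Let p ∈ ℕ, p ≥ 1, β > p, z₁ = p(1 + i√(β/p - 1)), z₂ = p(-1 + i√(β/p - 1)). Then for all n ∈ ℤ: e^{πi(n + 1/p) z₁} = e^{πi(n + 1/p) z₂} when n ≥ 0, e^{πi(n + 1/p) \overline{z₁}} = e^{πi(n + 1/p) \overline{z₂}} when n < 0, e^{πinβ/\overline{z₁}} = e^{πinβ/\overline{z₂}} when n ≥ 0, and e^{πinβ/z₁} = e^{πinβ/z₂} when n < 0. -/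
open Complex

/-- For `p ∈ ℕ`, `p ≥ 1`, `β > p`, `z₁ = p(1 + i√(β/p - 1))`, `z₂ = p(-1 + i√(β/p - 1))`,
the extended functions `e^p_n` and `e^β_n` agree at `z₁` and `z₂` for all `n ∈ ℤ`. -/
theorem stmt3 (p : ℕ) (hp : 1 ≤ p) (β : ℝ) (hβ : (p : ℝ) < β) (n : ℤ) :
    let z₁ : ℂ := (p : ℂ) * (1 + Complex.I * (Real.sqrt (β / p - 1) : ℝ))
    let z₂ : ℂ := (p : ℂ) * (-1 + Complex.I * (Real.sqrt (β / p - 1) : ℝ))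
    (0 ≤ n → Complex.exp ((Real.pi : ℂ) * Complex.I * ((n : ℂ) + 1 / (p : ℂ)) * z₁)
      = Complex.exp ((Real.pi : ℂ) * Complex.I * ((n : ℂ) + 1 / (p : ℂ)) * z₂)) ∧
    (n < 0 → Complex.exp ((Real.pi : ℂ) * Complex.I * ((n : ℂ) + 1 / (p : ℂ)) * (starRingEnd ℂ) z₁)
      = Complex.exp ((Real.pi : ℂ) * Complex.I * ((n : ℂ) + 1 / (p : ℂ)) * (starRingEnd ℂ) z₂)) ∧
    (0 ≤ n → Complex.exp ((Real.pi : ℂ) * Complex.I * (n : ℂ) * (β : ℂ) / (starRingEnd ℂ) z₁)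
      = Complex.exp ((Real.pi : ℂ) * Complex.I * (n : ℂ) * (β : ℂ) / (starRingEnd ℂ) z₂)) ∧
    (n < 0 → Complex.exp ((Real.pi : ℂ) * Complex.I * (n : ℂ) * (β : ℂ) / z₁)
      = Complex.exp ((Real.pi : ℂ) * Complex.I * (n : ℂ) * (β : ℂ) / z₂)) := by
  intro z₁ z₂
  have hp0 : (p : ℂ) ≠ 0 := Nat.cast_ne_zero.mpr (by omega)
  have hβpos : (0:ℝ) < β := lt_of_le_of_lt (Nat.cast_nonneg p) hβ
  have hβ0 : (β : ℂ) ≠ 0 := by exact_mod_cast ne_of_gt hβpos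
  set c : ℂ := ((Real.sqrt (β / p - 1) : ℝ) : ℂ) with hc
  have hs : Real.sqrt (β / p - 1) ^ 2 = β / p - 1 := by
    rw [Real.sq_sqrt]
    have : (1:ℝ) ≤ β / p := by
      rw [le_div_iff₀ (by positivity)]
      linarith
    linarith
  have hc2 : c ^ 2 = (β : ℂ) / (p : ℂ) - 1 := by
    rw [hc, ← Complex.ofReal_pow, hs]
    push_cast
    ring
  have hprod : z₁ * z₂ = -((p:ℂ) * β) := by
    show ((p : ℂ) * (1 + Complex.I * c)) * ((p : ℂ) * (-1 + Complex.I * c)) = _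
    have h1 : (1 + Complex.I * c) * (-1 + Complex.I * c) = -((β:ℂ)/p) := by
      have hI : Complex.I ^ 2 = -1 := Complex.I_sq
      linear_combination c^2 * hI - hc2
    rw [mul_mul_mul_comm, h1]
    field_simp
  have hdiff : z₁ - z₂ = 2 * (p:ℂ) := by
    show (p : ℂ) * (1 + Complex.I * c) - (p : ℂ) * (-1 + Complex.I * c) = _
    ring
  have hne : z₁ * z₂ ≠ 0 := by
    rw [hprod]
    exact neg_ne_zero.mpr (mul_ne_zero hp0 hβ0)
  have hz1 : z₁ ≠ 0 := left_ne_zero_of_mul hne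
  have hz2 : z₂ ≠ 0 := right_ne_zero_of_mul hne
  have hcz1 : (starRingEnd ℂ) z₁ ≠ 0 := by simpa using hz1
  have hcz2 : (starRingEnd ℂ) z₂ ≠ 0 := by simpa using hz2
  have hcprod : (starRingEnd ℂ) z₁ * (starRingEnd ℂ) z₂ = -((p:ℂ) * β) := by
    rw [← map_mul, hprod]
    simp [Complex.conj_ofReal]
  have hcdiff : (starRingEnd ℂ) z₁ - (starRingEnd ℂ) z₂ = 2 * (p:ℂ) := by
    rw [← map_sub, hdiff, show (2:ℂ) * (p:ℂ) = ((2 * p : ℝ) : ℂ) by push_cast; ring,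
      Complex.conj_ofReal]
  clear_value z₁ z₂
  refine ⟨fun _ => ?_, fun _ => ?_, fun _ => ?_, fun _ => ?_⟩
  · have key : (Real.pi : ℂ) * Complex.I * ((n : ℂ) + 1 / (p : ℂ)) * z₁
        = (Real.pi : ℂ) * Complex.I * ((n : ℂ) + 1 / (p : ℂ)) * z₂
          + ((n * p + 1 : ℤ) : ℂ) * (2 * Real.pi * Complex.I) := by
      push_cast
      field_simp
      linear_combination ((n:ℂ) * p + 1) * hdiff
    rw [key, Complex.exp_add, Complex.exp_int_mul_two_pi_mul_I, mul_one]
  · have key : (Real.pi : ℂ) * Complex.I * ((n : ℂ) + 1 / (p : ℂ)) * (starRingEnd ℂ) z₁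
        = (Real.pi : ℂ) * Complex.I * ((n : ℂ) + 1 / (p : ℂ)) * (starRingEnd ℂ) z₂
          + ((n * p + 1 : ℤ) : ℂ) * (2 * Real.pi * Complex.I) := by
      push_cast
      field_simp
      linear_combination ((n:ℂ) * p + 1) * hcdiff
    rw [key, Complex.exp_add, Complex.exp_int_mul_two_pi_mul_I, mul_one]
  · have key : (Real.pi : ℂ) * Complex.I * (n : ℂ) * (β : ℂ) / (starRingEnd ℂ) z₁
        = (Real.pi : ℂ) * Complex.I * (n : ℂ) * (β : ℂ) / (starRingEnd ℂ) z₂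
          + ((n : ℤ) : ℂ) * (2 * Real.pi * Complex.I) := by
      field_simp
      linear_combination (-(n:ℂ) * β) * hcdiff
        - (2 * (n:ℂ)) * hcprod
    rw [key, Complex.exp_add, Complex.exp_int_mul_two_pi_mul_I, mul_one]
  · have key : (Real.pi : ℂ) * Complex.I * (n : ℂ) * (β : ℂ) / z₁
        = (Real.pi : ℂ) * Complex.I * (n : ℂ) * (β : ℂ) / z₂
          + ((n : ℤ) : ℂ) * (2 * Real.pi * Complex.I) := by
      field_simp
      linear_combination (-(n:ℂ) * β) * hdiff
        - (2 * (n:ℂ)) * hprod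
    rw [key, Complex.exp_add, Complex.exp_int_mul_two_pi_mul_I, mul_one]
end

section
/- Let p > 0 and j be a nonzero integer. The map τ defined by τ(x) = -p/x + 2j is a bijection from the interval (p/(2j+1), p/(2j-1)] onto (-1, 1], and τ(x) = {-p/x}_2 for all x in this interval. -/
/-- `{u}₂`: the unique element of `(-1, 1]` with `u - {u}₂ ∈ 2ℤ`. -/
noncomputable def frac2 (u : ℝ) : ℝ := u - 2 * ⌈(u - 1) / 2⌉

private lemma div_lt_div_neg {p a b : ℝ} (hp : 0 < p) (ha : a < 0) (hb : b < 0)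
    (h : a < b) : p / b < p / a := by
  rw [div_lt_iff_of_neg hb, div_mul_eq_mul_div, div_lt_iff_of_neg ha]
  exact mul_lt_mul_of_pos_left h hp

private lemma div_le_div_neg {p a b : ℝ} (hp : 0 < p) (ha : a < 0) (hb : b < 0)
    (h : a ≤ b) : p / b ≤ p / a := by
  rw [div_le_iff_of_neg hb, div_mul_eq_mul_div, div_le_iff_of_neg ha]
  exact mul_le_mul_of_nonneg_left h hp.le

/-- For `p > 0` and a nonzero integer `j`, the map `x ↦ -p/x + 2j` is a bijection from
`(p/(2j+1), p/(2j-1)]` onto `(-1, 1]`, and on this interval it agrees with `{-p/x}₂`. -/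
theorem stmt4 (p : ℝ) (hp : 0 < p) (j : ℤ) (hj : j ≠ 0) :
    Set.BijOn (fun x : ℝ => -p / x + 2 * (j : ℝ))
      (Set.Ioc (p / (2 * (j : ℝ) + 1)) (p / (2 * (j : ℝ) - 1)))
      (Set.Ioc (-1 : ℝ) 1) ∧
    ∀ x ∈ Set.Ioc (p / (2 * (j : ℝ) + 1)) (p / (2 * (j : ℝ) - 1)),
      -p / x + 2 * (j : ℝ) = frac2 (-p / x) := by
  have hcs : 1 ≤ (j : ℝ) ∨ (j : ℝ) ≤ -1 := by
    rcases lt_or_gt_of_ne hj with h | h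
    · right
      have : j ≤ -1 := by omega
      exact_mod_cast this
    · left
      have : 1 ≤ j := by omega
      exact_mod_cast this
  -- key facts about points of the interval
  have key : ∀ x ∈ Set.Ioc (p / (2 * (j : ℝ) + 1)) (p / (2 * (j : ℝ) - 1)),
      x ≠ 0 ∧ -1 < -p / x + 2 * (j : ℝ) ∧ -p / x + 2 * (j : ℝ) ≤ 1 := by
    intro x hx
    obtain ⟨hx1, hx2⟩ := hx
    have hnd : -p / x = -(p / x) := neg_div x p
    rcases hcs with h | h
    · have h1 : (0:ℝ) < 2 * (j : ℝ) - 1 := by linarith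
      have h2 : (0:ℝ) < 2 * (j : ℝ) + 1 := by linarith
      have hx0 : 0 < x := lt_trans (by positivity) hx1
      have e1 : p < x * (2 * (j : ℝ) + 1) := by
        rw [div_lt_iff₀ h2] at hx1; linarith
      have e2 : x * (2 * (j : ℝ) - 1) ≤ p := by
        rw [le_div_iff₀ h1] at hx2; linarith
      have u1 : p / x < 2 * (j : ℝ) + 1 := (div_lt_iff₀ hx0).mpr (by linarith)
      have u2 : 2 * (j : ℝ) - 1 ≤ p / x := (le_div_iff₀ hx0).mpr (by linarith)
      refine ⟨ne_of_gt hx0, ?_, ?_⟩ <;> rw [hnd] <;> linarith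
    · have h1 : (2 * (j : ℝ) - 1) < 0 := by linarith
      have h2 : (2 * (j : ℝ) + 1) < 0 := by linarith
      have hx0 : x < 0 := lt_of_le_of_lt hx2 (div_neg_of_pos_of_neg hp h1)
      have e1 : x * (2 * (j : ℝ) + 1) < p := by
        rw [div_lt_iff_of_neg h2] at hx1; linarith
      have e2 : p ≤ x * (2 * (j : ℝ) - 1) := by
        rw [le_div_iff_of_neg h1] at hx2; linarith
      have u1 : p / x < 2 * (j : ℝ) + 1 := (div_lt_iff_of_neg hx0).mpr
        (by linear_combination e1)
      have u2 : 2 * (j : ℝ) - 1 ≤ p / x := (le_div_iff_of_neg hx0).mpr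
        (by linear_combination e2)
      refine ⟨ne_of_lt hx0, ?_, ?_⟩ <;> rw [hnd] <;> linarith
  have mapsf : Set.MapsTo (fun x : ℝ => -p / x + 2 * (j : ℝ))
      (Set.Ioc (p / (2 * (j : ℝ) + 1)) (p / (2 * (j : ℝ) - 1)))
      (Set.Ioc (-1 : ℝ) 1) := by
    intro x hx
    obtain ⟨_, h1, h2⟩ := key x hx
    exact ⟨h1, h2⟩
  have mapsg : Set.MapsTo (fun y : ℝ => p / (2 * (j : ℝ) - y))
      (Set.Ioc (-1 : ℝ) 1)
      (Set.Ioc (p / (2 * (j : ℝ) + 1)) (p / (2 * (j : ℝ) - 1))) := by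
    intro y hy
    obtain ⟨hy1, hy2⟩ := hy
    rcases hcs with h | h
    · have hd : 0 < 2 * (j : ℝ) - y := by linarith
      have hd1 : 0 < 2 * (j : ℝ) - 1 := by linarith
      have hd2 : 0 < 2 * (j : ℝ) + 1 := by linarith
      constructor
      · rw [div_lt_div_iff₀ hd2 hd]
        nlinarith
      · rw [div_le_div_iff₀ hd hd1]
        nlinarith
    · have hd : 2 * (j : ℝ) - y < 0 := by linarith
      have hd1 : 2 * (j : ℝ) - 1 < 0 := by linarith
      have hd2 : 2 * (j : ℝ) + 1 < 0 := by linarith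
      exact ⟨div_lt_div_neg hp hd hd2 (by linarith),
        div_le_div_neg hp hd1 hd (by linarith)⟩
  have hinv : Set.InvOn (fun y : ℝ => p / (2 * (j : ℝ) - y))
      (fun x : ℝ => -p / x + 2 * (j : ℝ))
      (Set.Ioc (p / (2 * (j : ℝ) + 1)) (p / (2 * (j : ℝ) - 1)))
      (Set.Ioc (-1 : ℝ) 1) := by
    constructor
    · intro x hx
      obtain ⟨hx0, _, _⟩ := key x hx
      show p / (2 * (j : ℝ) - (-p / x + 2 * (j : ℝ))) = x
      rw [show 2 * (j : ℝ) - (-p / x + 2 * (j : ℝ)) = p / x by ring]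
      exact div_div_cancel₀ hp.ne'
    · intro y hy
      obtain ⟨hy1, hy2⟩ := hy
      have hd : 2 * (j : ℝ) - y ≠ 0 := by
        rcases hcs with h | h
        · exact ne_of_gt (by linarith)
        · exact ne_of_lt (by linarith)
      show -p / (p / (2 * (j : ℝ) - y)) + 2 * (j : ℝ) = y
      rw [neg_div, div_div_cancel₀ hp.ne']
      ring
  refine ⟨hinv.bijOn mapsf mapsg, ?_⟩
  intro x hx
  obtain ⟨hx0, h1, h2⟩ := key x hx
  have hceil : ⌈(-p / x - 1) / 2⌉ = -j := by
    rw [Int.ceil_eq_iff]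
    push_cast
    constructor <;> linarith
  unfold frac2
  rw [hceil]
  push_cast
  ring
end

section
/- Let p > 0 and let ω be the σ-finite Borel measure on (-p, p] with density dω(x) = dx/(p² - x²). Then ω is U-invariant: for every bounded Borel function φ on (-p, p] that is continuous off a countable set, ∫_{(-p,p]} φ(U(x)) dω(x) = ∫_{(-p,p]} φ(x) dω(x), where U(x) = p·{-p/x}_2 for x ≠ 0 and U(0) = 0. -/
open MeasureTheory
open scoped ENNReal

noncomputable def Tmap (p : ℝ) (j : ℤ) (t : ℝ) : ℝ := -p ^ 2 / (t + 2 * p * j)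

def Iset (p : ℝ) (j : ℤ) : Set ℝ :=
  {x | x ∈ Set.Ioc (-p) p ∧ x ≠ 0 ∧ ⌈(-p / x - 1) / 2⌉ = j}

lemma frac2_mem (u : ℝ) : frac2 u ∈ Set.Ioc (-1 : ℝ) 1 := by
  have h1 := Int.ceil_lt_add_one ((u - 1) / 2)
  have h2 := Int.le_ceil ((u - 1) / 2)
  unfold frac2
  constructor <;> [nlinarith; nlinarith]

lemma ceil_zero_of_Ioc {u : ℝ} (h1 : -1 < u) (h2 : u ≤ 1) : ⌈(u - 1) / 2⌉ = 0 := by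
  rw [Int.ceil_eq_zero_iff]
  constructor <;> linarith

lemma frac2_eq_self {u : ℝ} (h : u ∈ Set.Ioc (-1 : ℝ) 1) : frac2 u = u := by
  simp [frac2, ceil_zero_of_Ioc h.1 h.2]

lemma frac2_add_int (u : ℝ) (j : ℤ) : frac2 (u + 2 * j) = frac2 u := by
  have : (u + 2 * j - 1) / 2 = (u - 1) / 2 + j := by ring
  simp only [frac2, this, Int.ceil_add_intCast]
  push_cast; ring


lemma denom_pos {p : ℝ} (hp : 0 < p) {j : ℤ} (hj : 1 ≤ j) {t : ℝ}
    (ht : t ∈ Set.Ioc (-p) p) : p < t + 2 * p * j := by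
  have h : (1 : ℝ) ≤ j := by exact_mod_cast hj
  nlinarith [ht.1, mul_le_mul_of_nonneg_left h (le_of_lt hp)]

lemma denom_neg {p : ℝ} (hp : 0 < p) {j : ℤ} (hj : j ≤ -1) {t : ℝ}
    (ht : t ∈ Set.Ioc (-p) p) : t + 2 * p * j ≤ -p := by
  have h : (j : ℝ) ≤ -1 := by exact_mod_cast hj
  nlinarith [ht.2, mul_le_mul_of_nonneg_left h (le_of_lt hp)]

lemma denom_ne {p : ℝ} (hp : 0 < p) {j : ℤ} (hj : j ≠ 0) {t : ℝ}
    (ht : t ∈ Set.Ioc (-p) p) : t + 2 * p * j ≠ 0 := by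
  rcases lt_or_gt_of_ne hj with h | h
  · have := denom_neg hp (by omega : j ≤ -1) ht; linarith
  · have := denom_pos hp (by omega : 1 ≤ j) ht; linarith

lemma Tmap_mem {p : ℝ} (hp : 0 < p) {j : ℤ} (hj : j ≠ 0) {t : ℝ}
    (ht : t ∈ Set.Ioc (-p) p) : Tmap p j t ∈ Iset p j := by
  have hd := denom_ne hp hj ht
  have hp2 : p ^ 2 ≠ 0 := by positivity
  have hx0 : Tmap p j t ≠ 0 := div_ne_zero (by simpa using hp2) hd
  have hinv : -p / Tmap p j t = t / p + 2 * j := by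
    unfold Tmap; field_simp
  have hceil : ⌈(-p / Tmap p j t - 1) / 2⌉ = j := by
    rw [hinv]
    have : (t / p + 2 * j - 1) / 2 = (t / p - 1) / 2 + j := by ring
    rw [this, Int.ceil_add_intCast]
    have h1 : -1 < t / p := by rw [lt_div_iff₀ hp]; nlinarith [ht.1]
    have h2 : t / p ≤ 1 := by rw [div_le_one hp]; exact ht.2
    rw [ceil_zero_of_Ioc h1 h2]; ring
  refine ⟨?_, hx0, hceil⟩
  rcases lt_or_gt_of_ne hj with h | h
  · have hd2 := denom_neg hp (by omega : j ≤ -1) ht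
    have hdneg : t + 2 * p * j < 0 := by linarith
    constructor
    · unfold Tmap
      have hpos : 0 < -p ^ 2 / (t + 2 * p * ↑j) :=
        div_pos_of_neg_of_neg (by nlinarith) hdneg
      linarith
    · unfold Tmap
      rw [div_le_iff_of_neg hdneg]
      nlinarith
  · have hd2 := denom_pos hp (by omega : 1 ≤ j) ht
    constructor
    · unfold Tmap
      rw [neg_div, neg_lt_neg_iff, div_lt_iff₀ (by linarith : (0:ℝ) < t + 2 * p * ↑j)]
      nlinarith
    · unfold Tmap
      have : -p ^ 2 / (t + 2 * p * j) < 0 := div_neg_of_neg_of_pos (by nlinarith) (by linarith)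
      linarith

lemma Tmap_U {p : ℝ} (hp : 0 < p) {j : ℤ} (hj : j ≠ 0) {t : ℝ}
    (ht : t ∈ Set.Ioc (-p) p) {U : ℝ → ℝ}
    (hU : ∀ x, U x = if x = 0 then 0 else p * frac2 (-p / x)) :
    U (Tmap p j t) = t := by
  have hd := denom_ne hp hj ht
  have hp2 : p ^ 2 ≠ 0 := by positivity
  have hx0 : Tmap p j t ≠ 0 := div_ne_zero (by simpa using hp2) hd
  have hinv : -p / Tmap p j t = t / p + 2 * j := by
    unfold Tmap; field_simp
  rw [hU, if_neg hx0, hinv, frac2_add_int, frac2_eq_self]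
  · field_simp
  · have h1 : -1 < t / p := by rw [lt_div_iff₀ hp]; nlinarith [ht.1]
    have h2 : t / p ≤ 1 := by rw [div_le_one hp]; exact ht.2
    exact ⟨h1, h2⟩

lemma Tmap_image {p : ℝ} (hp : 0 < p) {j : ℤ} (hj : j ≠ 0) :
    Tmap p j '' Set.Ioc (-p) p = Iset p j := by
  apply Set.Subset.antisymm
  · rintro _ ⟨t, ht, rfl⟩; exact Tmap_mem hp hj ht
  · rintro x ⟨hx1, hx0, hceil⟩
    have hpne : p ≠ 0 := ne_of_gt hp
    set u := -p / x with hu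
    have hu0 : u ≠ 0 := div_ne_zero (by simpa using hpne) hx0
    refine ⟨p * frac2 u, ?_, ?_⟩
    · have := frac2_mem u
      constructor
      · nlinarith [this.1]
      · nlinarith [this.2]
    · have hfr : frac2 u = u - 2 * j := by
        simp only [frac2, hceil]
      unfold Tmap
      rw [hfr]
      have : p * (u - 2 * ↑j) + 2 * p * ↑j = p * u := by ring
      rw [this, hu]
      field_simp

lemma Iset_union {p : ℝ} (hp : 0 < p) :
    (⋃ i : {j : ℤ // j ≠ 0}, Iset p i) = Set.Ioc (-p) p \ {0} := by
  ext x
  simp only [Set.mem_iUnion, Set.mem_diff, Set.mem_singleton_iff]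
  constructor
  · rintro ⟨i, h1, h2, _⟩; exact ⟨h1, h2⟩
  · rintro ⟨hx1, hx0⟩
    refine ⟨⟨⌈(-p / x - 1) / 2⌉, ?_⟩, hx1, hx0, rfl⟩
    intro h0
    have hmem : -p / x ∈ Set.Ioc (-1 : ℝ) 0 ∨ True := Or.inr trivial
    have h1 : -1 < (-p / x - 1) / 2 ∧ (-p / x - 1) / 2 ≤ 0 := by
      have := Int.ceil_eq_zero_iff.mp h0
      exact ⟨by simpa using this.1, by simpa using this.2⟩
    have hu1 : -1 < -p / x := by linarith [h1.1]
    have hu2 : -p / x ≤ 1 := by linarith [h1.2]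
    rcases lt_or_gt_of_ne hx0 with hneg | hpos
    · have : 1 < -p / x := by
        rw [lt_div_iff_of_neg hneg]
        linarith [hx1.1]
      linarith
    · have : -p / x < -1 ∨ -p / x ≤ -1 := Or.inr (by
        rw [div_le_iff₀ hpos]
        nlinarith [hx1.2])
      rcases this with h | h
      · linarith
      · -- -p/x ≤ -1 contradicts -1 < -p/x
        linarith

lemma Iset_disjoint {p : ℝ} :
    Pairwise (Function.onFun Disjoint fun i : {j : ℤ // j ≠ 0} => Iset p i) := by
  rintro ⟨i, hi⟩ ⟨j, hj⟩ hij
  simp only [Function.onFun, Set.disjoint_left]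
  rintro x ⟨_, _, h1⟩ ⟨_, _, h2⟩
  exact hij (by simp [Subtype.ext_iff, ← h1, ← h2])

lemma Iset_measurable {p : ℝ} (j : ℤ) : MeasurableSet (Iset p j) := by
  have h1 : Measurable fun x : ℝ => ⌈(-p / x - 1) / 2⌉ := by
    apply Measurable.ceil
    exact ((measurable_const.div measurable_id).sub measurable_const).div measurable_const
  have : Iset p j = Set.Ioc (-p) p ∩ ({0}ᶜ ∩ (fun x : ℝ => ⌈(-p / x - 1) / 2⌉) ⁻¹' {j}) := by
    ext x; simp [Iset, and_assoc]
  rw [this]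
  exact measurableSet_Ioc.inter ((measurableSet_singleton 0).compl.inter (h1 (measurableSet_singleton j)))

lemma Tmap_inj {p : ℝ} (hp : 0 < p) {j : ℤ} (hj : j ≠ 0)
    (hne : ∀ t ∈ Set.Ioc (-p) p, t + 2 * p * j ≠ 0) :
    Set.InjOn (Tmap p j) (Set.Ioc (-p) p) := by
  intro a ha b hb h
  have hda := hne a ha
  have hdb := hne b hb
  have hp2 : p ^ 2 ≠ 0 := by positivity
  unfold Tmap at h
  field_simp at h
  simp only [neg_inj, one_div, inv_inj] at h
  linarith [h]

lemma Tmap_deriv {p : ℝ} {j : ℤ} {t : ℝ} (hd : t + 2 * p * j ≠ 0) :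
    HasDerivWithinAt (Tmap p j) (p ^ 2 / (t + 2 * p * j) ^ 2) (Set.Ioc (-p) p) t := by
  have h : HasDerivAt (fun t : ℝ => -p ^ 2 / (t + 2 * p * j))
      (p ^ 2 / (t + 2 * p * j) ^ 2) t := by
    have h1 : HasDerivAt (fun t : ℝ => t + 2 * p * j) 1 t :=
      (hasDerivAt_id t).add_const _
    have h2 := (h1.inv hd).const_mul (-p ^ 2 : ℝ)
    exact h2.congr_deriv (by ring)
  exact (h.hasDerivWithinAt)

lemma telescope_hasSum_s7 {c : ℕ → ℝ} {e : ℕ → ℝ} (hpos : ∀ n, 0 ≤ e n)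
    (heq : ∀ n : ℕ, e n = c n - c (n + 1))
    (hc : Filter.Tendsto c Filter.atTop (nhds 0)) :
    HasSum e (c 0) := by
  rw [hasSum_iff_tendsto_nat_of_nonneg hpos]
  have h : ∀ n : ℕ, ∑ i ∈ Finset.range n, e i = c 0 - c n := by
    intro n
    rw [Finset.sum_congr rfl fun i _ => heq i]
    exact Finset.sum_range_sub' c n
  simp only [h]
  simpa using Filter.Tendsto.const_sub (c 0) hc

lemma lin_tendsto {p b : ℝ} (hp : 0 < p) :
    Filter.Tendsto (fun n : ℕ => 2 * p * ((n : ℝ) + 1) + b) Filter.atTop Filter.atTop := by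
  apply Filter.tendsto_atTop_add_const_right
  apply Filter.Tendsto.const_mul_atTop (by linarith : (0:ℝ) < 2 * p)
  exact Filter.tendsto_atTop_add_const_right _ _ tendsto_natCast_atTop_atTop

lemma tele_step {p A : ℝ} (hp : 0 < p) (hA : 0 < A) :
    1 / (2 * p) * (1 / A) - 1 / (2 * p) * (1 / (A + 2 * p)) = 1 / (A * (A + 2 * p)) := by
  have h1 : A ≠ 0 := ne_of_gt hA
  have h2 : A + 2 * p ≠ 0 := by positivity
  have h3 : (2:ℝ) * p ≠ 0 := by positivity
  field_simp
  ring

lemma branch_hasSum {p t : ℝ} (hp : 0 < p) (h1 : -p < t) (h2 : t < p) :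
    HasSum (fun j : ℤ => if j = 0 then 0 else 1 / ((t + 2 * p * j) ^ 2 - p ^ 2))
      (1 / (p ^ 2 - t ^ 2)) := by
  set F : ℤ → ℝ := fun j => if j = 0 then 0 else 1 / ((t + 2 * p * j) ^ 2 - p ^ 2) with hF
  set c : ℕ → ℝ := fun n => 1 / (2 * p) * (1 / (2 * p * ((n : ℝ) + 1) + (t - p))) with hc
  set d : ℕ → ℝ := fun n => 1 / (2 * p) * (1 / (2 * p * ((n : ℝ) + 1) + (-t - p))) with hd
  have hcpos : ∀ n : ℕ, 0 < 2 * p * ((n : ℝ) + 1) + (t - p) := by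
    intro n; have : (0:ℝ) ≤ n := Nat.cast_nonneg n; nlinarith
  have hdpos : ∀ n : ℕ, 0 < 2 * p * ((n : ℝ) + 1) + (-t - p) := by
    intro n; have : (0:ℝ) ≤ n := Nat.cast_nonneg n; nlinarith
  have hclim : Filter.Tendsto c Filter.atTop (nhds 0) := by
    have := (tendsto_inv_atTop_zero.comp (lin_tendsto hp (b := t - p))).const_mul (1 / (2 * p))
    simpa [hc, one_div, Function.comp] using this
  have hdlim : Filter.Tendsto d Filter.atTop (nhds 0) := by
    have := (tendsto_inv_atTop_zero.comp (lin_tendsto hp (b := -t - p))).const_mul (1 / (2 * p))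
    simpa [hd, one_div, Function.comp] using this
  have hposside : HasSum (fun n : ℕ => F ((n : ℤ) + 1)) (c 0) := by
    apply telescope_hasSum_s7 _ _ hclim
    · intro n
      have hA := hcpos n
      simp only [hF]
      rw [if_neg (by omega)]
      have hcast : (((n : ℤ) + 1 : ℤ) : ℝ) = (n : ℝ) + 1 := by push_cast; ring
      rw [hcast]
      have hB := hcpos n
      apply le_of_lt (div_pos one_pos ?_)
      nlinarith
    · intro n
      have hA := hcpos n
      have hB := hcpos (n + 1)
      push_cast at hB
      simp only [hF, hc]
      rw [if_neg (by omega)]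
      have hcast : (((n : ℤ) + 1 : ℤ) : ℝ) = (n : ℝ) + 1 := by push_cast; ring
      rw [hcast]
      push_cast
      have hX : (t + 2 * p * ((n:ℝ) + 1)) ^ 2 - p ^ 2
          = (2 * p * ((n:ℝ) + 1) + (t - p)) * ((2 * p * ((n:ℝ) + 1) + (t - p)) + 2 * p) := by ring
      have hBeq : 2 * p * ((n:ℝ) + 1 + 1) + (t - p) = (2 * p * ((n:ℝ) + 1) + (t - p)) + 2 * p := by ring
      rw [hX, hBeq, tele_step hp hA]
  have hnegside : HasSum (fun n : ℕ => F (-((n : ℤ) + 1))) (d 0) := by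
    apply telescope_hasSum_s7 _ _ hdlim
    · intro n
      simp only [hF]
      rw [if_neg (by omega)]
      have hcast : ((-((n : ℤ) + 1) : ℤ) : ℝ) = -((n : ℝ) + 1) := by push_cast; ring
      rw [hcast]
      have hA := hdpos n
      apply le_of_lt (div_pos one_pos ?_)
      nlinarith
    · intro n
      have hA := hdpos n
      have hB := hdpos (n + 1)
      push_cast at hB
      simp only [hF, hd]
      rw [if_neg (by omega)]
      have hcast : ((-((n : ℤ) + 1) : ℤ) : ℝ) = -((n : ℝ) + 1) := by push_cast; ring
      rw [hcast]
      push_cast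
      have hX : (t + 2 * p * (-((n:ℝ) + 1))) ^ 2 - p ^ 2
          = (2 * p * ((n:ℝ) + 1) + (-t - p)) * ((2 * p * ((n:ℝ) + 1) + (-t - p)) + 2 * p) := by ring
      have hBeq : 2 * p * ((n:ℝ) + 1 + 1) + (-t - p) = (2 * p * ((n:ℝ) + 1) + (-t - p)) + 2 * p := by ring
      rw [hX, hBeq, tele_step hp hA]
  have hposside' : HasSum (fun n : ℕ => F (((n + 1 : ℕ) : ℤ))) (c 0) := by
    convert hposside using 2 with n
    rw [Nat.cast_succ]
  have hnat : HasSum (fun n : ℕ => F (n : ℤ)) (c 0) := by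
    have h0 : F 0 = 0 := by simp [hF]
    have h := (hasSum_nat_add_iff (f := fun n : ℕ => F (n : ℤ)) 1).mp hposside'
    simpa [h0] using h
  have htotal : HasSum F (c 0 + d 0) := hnat.of_nat_of_neg_add_one hnegside
  convert htotal using 1
  simp only [hc, hd]
  norm_num
  have hpt : p + t ≠ 0 := by linarith
  have hpt2 : p - t ≠ 0 := by linarith
  have hp0 : p ≠ 0 := ne_of_gt hp
  have e1 : 2 * p + (t - p) = p + t := by ring
  have e2 : 2 * p + (-t - p) = p - t := by ring
  rw [e1, e2]
  have e3 : p ^ 2 - t ^ 2 ≠ 0 := by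
    intro h; nlinarith
  field_simp
  ring

lemma denom_sq_pos {p t : ℝ} (hp : 0 < p) (h1 : -p < t) (h2 : t < p) {j : ℤ} (hj : j ≠ 0) :
    0 < (t + 2 * p * j) ^ 2 - p ^ 2 := by
  rcases lt_or_gt_of_ne hj with h | h
  · have hj1 : (j : ℝ) ≤ -1 := by exact_mod_cast (by omega : j ≤ -1)
    nlinarith [mul_le_mul_of_nonneg_left hj1 (le_of_lt hp)]
  · have hj1 : (1 : ℝ) ≤ j := by exact_mod_cast (by omega : 1 ≤ j)
    nlinarith [mul_le_mul_of_nonneg_left hj1 (le_of_lt hp)]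

lemma branch_tsum {p t : ℝ} (hp : 0 < p) (h1 : -p < t) (h2 : t < p) :
    ∑' i : {j : ℤ // j ≠ 0}, ENNReal.ofReal (1 / ((t + 2 * p * (i : ℤ)) ^ 2 - p ^ 2))
      = ENNReal.ofReal (1 / (p ^ 2 - t ^ 2)) := by
  set F : ℤ → ℝ := fun j => if j = 0 then 0 else 1 / ((t + 2 * p * j) ^ 2 - p ^ 2) with hF
  have hsupp : Function.support F ⊆ {j : ℤ | j ≠ 0} := by
    intro j hj
    simp only [Function.mem_support, hF] at hj
    intro h0
    exact hj (by simp [h0])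
  have hsub : HasSum (fun i : {j : ℤ // j ≠ 0} => F i) (1 / (p ^ 2 - t ^ 2)) := by
    exact (hasSum_subtype_iff_of_support_subset hsupp).mpr (branch_hasSum hp h1 h2)
  have heq : (fun i : {j : ℤ // j ≠ 0} => F i)
      = fun i : {j : ℤ // j ≠ 0} => 1 / ((t + 2 * p * (i : ℤ)) ^ 2 - p ^ 2) := by
    funext i
    simp only [hF]
    rw [if_neg i.2]
  rw [heq] at hsub
  rw [← hsub.tsum_eq]
  exact (ENNReal.ofReal_tsum_of_nonneg
    (fun i => le_of_lt (div_pos one_pos (denom_sq_pos hp h1 h2 i.2))) hsub.summable).symm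

lemma frac2_measurable : Measurable frac2 := by
  unfold frac2
  exact measurable_id.sub ((measurable_const.mul
    (measurable_from_top.comp (Measurable.ceil ((measurable_id.sub measurable_const).div measurable_const)))).comp measurable_id)

lemma U_measurable {p : ℝ} {U : ℝ → ℝ}
    (hU : ∀ x, U x = if x = 0 then 0 else p * frac2 (-p / x)) : Measurable U := by
  have : U = Set.piecewise {(0:ℝ)} (fun _ => 0) (fun x => p * frac2 (-p / x)) := by
    funext x
    rw [hU x]
    by_cases h : x = 0 <;> simp [Set.piecewise, h]
  rw [this]
  apply Measurable.piecewise (measurableSet_singleton 0) measurable_const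
  exact measurable_const.mul (frac2_measurable.comp (measurable_const.div measurable_id))

lemma density_transform {p : ℝ} (hp : 0 < p) {j : ℤ} (hj : j ≠ 0) {t : ℝ}
    (ht : t ∈ Set.Ioc (-p) p) :
    ENNReal.ofReal (p ^ 2 / (t + 2 * p * j) ^ 2) * ENNReal.ofReal (1 / (p ^ 2 - Tmap p j t ^ 2))
      = ENNReal.ofReal (1 / ((t + 2 * p * j) ^ 2 - p ^ 2)) := by
  have hd := denom_ne hp hj ht
  rw [← ENNReal.ofReal_mul (by positivity)]
  congr 1
  have hT : Tmap p j t ^ 2 = p ^ 4 / (t + 2 * p * j) ^ 2 := by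
    unfold Tmap; rw [div_pow]; ring_nf
  rw [hT]
  by_cases hc : (t + 2 * p * j) ^ 2 - p ^ 2 = 0
  · have h0 : p ^ 2 - p ^ 4 / (t + 2 * p * j) ^ 2 = 0 := by
      rw [sub_eq_zero, eq_div_iff (by positivity)]
      nlinarith
    rw [hc, h0]
    simp
  · have key : p ^ 2 - p ^ 4 / (t + 2 * p * j) ^ 2
        = p ^ 2 * ((t + 2 * p * j) ^ 2 - p ^ 2) / (t + 2 * p * j) ^ 2 := by
      have hd2 : (t + 2 * p * j) ^ 2 ≠ 0 := pow_ne_zero 2 hd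
      rw [eq_div_iff hd2, sub_mul, div_mul_cancel₀ _ hd2]
      ring
    rw [key, one_div_div]
    have hd2 : (t + 2 * p * j) ^ 2 ≠ 0 := pow_ne_zero 2 hd
    have hp0 : p ^ 2 ≠ 0 := by positivity
    rw [div_mul_div_comm, mul_comm (p ^ 2), ← div_div, mul_div_cancel_left₀ _ hd2, div_mul_eq_div_div, div_self hp0]

lemma g_measurable {p : ℝ} : Measurable fun x : ℝ => ENNReal.ofReal (1 / (p ^ 2 - x ^ 2)) :=
  (measurable_const.div (measurable_const.sub (measurable_id.pow_const 2))).ennreal_ofReal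

lemma k_measurable {p : ℝ} (j : ℤ) :
    Measurable fun t : ℝ => ENNReal.ofReal (1 / ((t + 2 * p * j) ^ 2 - p ^ 2)) :=
  (measurable_const.div (((measurable_id.add_const _).pow_const 2).sub measurable_const)).ennreal_ofReal

lemma main_lintegral {p : ℝ} (hp : 0 < p) {U : ℝ → ℝ}
    (hU : ∀ x, U x = if x = 0 then 0 else p * frac2 (-p / x))
    {f : ℝ → ℝ≥0∞} (hf : Measurable f) :
    ∫⁻ x, f (U x) ∂((volume.restrict (Set.Ioc (-p) p)).withDensity
        (fun x => ENNReal.ofReal (1 / (p ^ 2 - x ^ 2))))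
      = ∫⁻ x, f x ∂((volume.restrict (Set.Ioc (-p) p)).withDensity
        (fun x => ENNReal.ofReal (1 / (p ^ 2 - x ^ 2)))) := by
  set g : ℝ → ℝ≥0∞ := fun x => ENNReal.ofReal (1 / (p ^ 2 - x ^ 2)) with hg
  have hgm : Measurable g := g_measurable
  have hUm : Measurable U := U_measurable hU
  rw [lintegral_withDensity_eq_lintegral_mul _ hgm (hf.comp' hUm),
      lintegral_withDensity_eq_lintegral_mul _ hgm hf]
  -- reduce RHS to a.e. Ioo and the tsum identity
  have hIoc_Ioo : (Set.Ioc (-p) p : Set ℝ) =ᵐ[volume] Set.Ioo (-p) p :=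
    Ioo_ae_eq_Ioc.symm
  have hIoc_diff : (Set.Ioc (-p) p : Set ℝ) =ᵐ[volume] (Set.Ioc (-p) p \ ({0} : Set ℝ)) :=
    (diff_null_ae_eq_self (measure_singleton 0)).symm
  calc ∫⁻ x, (g * fun x => f (U x)) x ∂(volume.restrict (Set.Ioc (-p) p))
      = ∫⁻ x in Set.Ioc (-p) p \ {0}, g x * f (U x) := by
        rw [Measure.restrict_congr_set hIoc_diff]; rfl
    _ = ∑' i : {j : ℤ // j ≠ 0}, ∫⁻ x in Iset p i, g x * f (U x) := by
        rw [← Iset_union hp, lintegral_iUnion (fun i => Iset_measurable _) Iset_disjoint]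
    _ = ∑' i : {j : ℤ // j ≠ 0}, ∫⁻ t in Set.Ioc (-p) p,
          f t * ENNReal.ofReal (1 / ((t + 2 * p * (i : ℤ)) ^ 2 - p ^ 2)) := by
        congr 1
        funext i
        rw [← Tmap_image hp i.2]
        rw [MeasureTheory.lintegral_image_eq_lintegral_abs_det_fderiv_mul volume
          measurableSet_Ioc
          (fun t ht => ((Tmap_deriv (denom_ne hp i.2 ht)).hasFDerivWithinAt))
          (Tmap_inj hp i.2 (fun t ht => denom_ne hp i.2 ht))
          (fun x => g x * f (U x))]
        apply setLIntegral_congr_fun measurableSet_Ioc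
        intro t ht
        beta_reduce
        rw [ContinuousLinearMap.det_toSpanSingleton]
        rw [Tmap_U hp i.2 ht hU]
        rw [abs_of_nonneg (by positivity), hg]
        rw [show ENNReal.ofReal (p ^ 2 / (t + 2 * p * (i:ℤ)) ^ 2) *
              (ENNReal.ofReal (1 / (p ^ 2 - Tmap p i t ^ 2)) * f t)
            = (ENNReal.ofReal (p ^ 2 / (t + 2 * p * (i:ℤ)) ^ 2) *
              ENNReal.ofReal (1 / (p ^ 2 - Tmap p i t ^ 2))) * f t from by ring]
        rw [density_transform hp i.2 ht]
        ring
    _ = ∫⁻ t in Set.Ioc (-p) p, ∑' i : {j : ℤ // j ≠ 0},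
          f t * ENNReal.ofReal (1 / ((t + 2 * p * (i : ℤ)) ^ 2 - p ^ 2)) := by
        exact (lintegral_tsum (fun i => (hf.mul (k_measurable _)).aemeasurable)).symm
    _ = ∫⁻ t in Set.Ioc (-p) p, f t * g t := by
        rw [Measure.restrict_congr_set hIoc_Ioo]
        apply setLIntegral_congr_fun measurableSet_Ioo
        intro t ht
        beta_reduce
        rw [ENNReal.tsum_mul_left, branch_tsum hp ht.1 ht.2]
    _ = ∫⁻ x, (g * f) x ∂(volume.restrict (Set.Ioc (-p) p)) := by
        apply lintegral_congr
        intro t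
        simp [mul_comm]


/-- The measure `dω(x) = dx/(p² - x²)` on `(-p, p]` is invariant under the Gauss-type
map `U(x) = p·{-p/x}₂`: for every bounded Borel `φ` continuous off a countable set,
`∫ φ∘U dω = ∫ φ dω`. -/
theorem stmt7 (p : ℝ) (hp : 0 < p)
    (ω : Measure ℝ)
    (hω : ω = (volume.restrict (Set.Ioc (-p) p)).withDensity
      (fun x => ENNReal.ofReal (1 / (p ^ 2 - x ^ 2))))
    (U : ℝ → ℝ) (hU : ∀ x, U x = if x = 0 then 0 else p * frac2 (-p / x))
    (φ : ℝ → ℝ) (hmeas : Measurable φ) (hbdd : ∃ C, ∀ x, |φ x| ≤ C)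
    (hcont : ∃ D : Set ℝ, D.Countable ∧ ContinuousOn φ (Set.Ioc (-p) p \ D)) :
    ∫ x, φ (U x) ∂ω = ∫ x, φ x ∂ω := by
  have hUm : Measurable U := U_measurable hU
  have hmap : ω.map U = ω := by
    apply Measure.ext
    intro s hs
    rw [Measure.map_apply hUm hs]
    have key := main_lintegral hp hU (f := s.indicator 1) ((measurable_one).indicator hs)
    rw [← hω] at key
    have h1 : ∫⁻ x, s.indicator 1 (U x) ∂ω = ω (U ⁻¹' s) := by
      have : (fun x => s.indicator (1 : ℝ → ℝ≥0∞) (U x)) = (U ⁻¹' s).indicator 1 := by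
        funext x
        by_cases h : U x ∈ s <;> simp [Set.indicator, h]
      rw [this, lintegral_indicator_one (hUm hs)]
    have h2 : ∫⁻ x, s.indicator 1 x ∂ω = ω s := lintegral_indicator_one hs
    rw [h1, h2] at key
    exact key
  calc ∫ x, φ (U x) ∂ω = ∫ y, φ y ∂(ω.map U) :=
        (integral_map hUm.aemeasurable hmeas.aestronglyMeasurable).symm
    _ = ∫ x, φ x ∂ω := by rw [hmap]
end

section
/- Let p > 0 and 0 < β ≤ p. The Perron–Frobenius operator P_β : L¹((-p,p]) → L¹((-p,p]) defined by P_β[f](x) = ∑_{j ∈ ℤ, j ≠ 0} (pβ/(2pj - x)²) f(pβ/(2pj - x)) is a well-defined linear operator satisfying ‖P_β[f]‖_{L¹} ≤ ‖f‖_{L¹} for all f ∈ L¹((-p,p]). -/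
open MeasureTheory Set Filter Topology
open scoped ENNReal NNReal


lemma aux_div_lt {c x y : ℝ} (hc : 0 < c) (hxy : 0 < x * y) (h : x < y) : c / y < c / x := by
  have hx : x ≠ 0 := fun h0 => by simp [h0] at hxy
  have hy : y ≠ 0 := fun h0 => by simp [h0] at hxy
  have key : c / x - c / y = c * (y - x) / (x * y) := by field_simp
  have pos : 0 < c * (y - x) / (x * y) := div_pos (mul_pos hc (by linarith)) hxy
  linarith

lemma aux_div_le {c x y : ℝ} (hc : 0 < c) (hxy : 0 < x * y) (h : x ≤ y) : c / y ≤ c / x := by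
  rcases h.eq_or_lt with rfl | h
  · exact le_refl _
  · exact (aux_div_lt hc hxy h).le

lemma aux_case {j : ℤ} (hj : j ≠ 0) : (1:ℝ) ≤ (j:ℝ) ∨ (j:ℝ) ≤ -1 := by
  rcases lt_or_gt_of_ne hj with h | h
  · right; have : j ≤ -1 := by omega
    exact_mod_cast this
  · left; have : 1 ≤ j := by omega
    exact_mod_cast this

lemma aux_tne {p : ℝ} (hp : 0 < p) {j : ℤ} (hj : j ≠ 0) {x : ℝ} (hx : x ∈ Set.Ioc (-p) p) :
    2 * p * (j:ℝ) - x ≠ 0 := by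
  rcases aux_case hj with h | h
  · nlinarith [hx.1, hx.2]
  · nlinarith [hx.1, hx.2]

lemma keyImage (p β : ℝ) (hp : 0 < p) (hβ : 0 < β) (j : ℤ) (hj : j ≠ 0) :
    (fun x => p * β / (2 * p * (j:ℝ) - x)) '' (Set.Ioc (-p) p)
      = Set.Ioc (β / (2 * (j:ℝ) + 1)) (β / (2 * (j:ℝ) - 1)) := by
  have hpβ : 0 < p * β := mul_pos hp hβ
  have hcase := aux_case hj
  have h2j1 : (2 * (j:ℝ) + 1) ≠ 0 := by rcases hcase with h | h <;> nlinarith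
  have h2jm1 : (2 * (j:ℝ) - 1) ≠ 0 := by rcases hcase with h | h <;> nlinarith
  have hp' : p ≠ 0 := hp.ne'
  have hβ' : β ≠ 0 := hβ.ne'
  have e1 : p * β / ((2 * (j:ℝ) + 1) * p) = β / (2 * (j:ℝ) + 1) := by
    field_simp
  have e2 : p * β / ((2 * (j:ℝ) - 1) * p) = β / (2 * (j:ℝ) - 1) := by
    field_simp
  ext u
  constructor
  · rintro ⟨x, hx, rfl⟩
    have hsigns : (0 < 2 * p * (j:ℝ) - x ∧ 0 < (2 * (j:ℝ) + 1) * p ∧ 0 < (2 * (j:ℝ) - 1) * p)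
        ∨ (2 * p * (j:ℝ) - x < 0 ∧ (2 * (j:ℝ) + 1) * p < 0 ∧ (2 * (j:ℝ) - 1) * p < 0) := by
      rcases hcase with h | h
      · left; refine ⟨by nlinarith [hx.2], by nlinarith, by nlinarith⟩
      · right; refine ⟨by nlinarith [hx.1], by nlinarith, by nlinarith⟩
    have hprod1 : 0 < (2 * p * (j:ℝ) - x) * ((2 * (j:ℝ) + 1) * p) := by
      rcases hsigns with ⟨a, b, c⟩ | ⟨a, b, c⟩
      · exact mul_pos a b
      · exact mul_pos_of_neg_of_neg a b
    have hprod2 : 0 < ((2 * (j:ℝ) - 1) * p) * (2 * p * (j:ℝ) - x) := by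
      rcases hsigns with ⟨a, b, c⟩ | ⟨a, b, c⟩
      · exact mul_pos c a
      · exact mul_pos_of_neg_of_neg c a
    constructor
    · rw [← e1]
      exact aux_div_lt hpβ hprod1 (by nlinarith [hx.1])
    · rw [← e2]
      exact aux_div_le hpβ hprod2 (by nlinarith [hx.2])
  · rintro ⟨hu1, hu2⟩
    have husign : 0 < u * (2 * (j:ℝ) + 1) ∧ 0 < u * (2 * (j:ℝ) - 1) := by
      rcases hcase with h | h
      · have h1 : 0 < β / (2 * (j:ℝ) + 1) := div_pos hβ (by nlinarith)
        constructor <;> nlinarith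
      · have h1 : β / (2 * (j:ℝ) - 1) < 0 := div_neg_of_pos_of_neg hβ (by nlinarith)
        constructor <;> nlinarith
    have hu0 : u ≠ 0 := by
      intro h0; rw [h0] at husign; simp at husign
    have e3 : p * β / (β / (2 * (j:ℝ) + 1)) = (2 * (j:ℝ) + 1) * p := by
      field_simp
    have e4 : p * β / (β / (2 * (j:ℝ) - 1)) = (2 * (j:ℝ) - 1) * p := by
      field_simp
    have hb1 : p * β / u < (2 * (j:ℝ) + 1) * p := by
      rw [← e3]
      refine aux_div_lt hpβ ?_ hu1
      rcases hcase with h | h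
      · exact mul_pos (div_pos hβ (by nlinarith)) (by nlinarith [husign.1])
      · exact mul_pos_of_neg_of_neg (div_neg_of_pos_of_neg hβ (by nlinarith)) (by nlinarith [husign.1])
    have hb2 : (2 * (j:ℝ) - 1) * p ≤ p * β / u := by
      rw [← e4]
      refine aux_div_le hpβ ?_ hu2
      rcases hcase with h | h
      · exact mul_pos (by nlinarith [husign.2]) (div_pos hβ (by nlinarith))
      · exact mul_pos_of_neg_of_neg (by nlinarith [husign.2]) (div_neg_of_pos_of_neg hβ (by nlinarith))
    refine ⟨2 * p * (j:ℝ) - p * β / u, ⟨by nlinarith, by nlinarith⟩, ?_⟩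
    show p * β / (2 * p * (j:ℝ) - (2 * p * (j:ℝ) - p * β / u)) = u
    have : 2 * p * (j:ℝ) - (2 * p * (j:ℝ) - p * β / u) = p * β / u := by ring
    rw [this]
    field_simp

lemma keyIsubS (p β : ℝ) (hp : 0 < p) (hβ : 0 < β) (hβp : β ≤ p) (j : ℤ) (hj : j ≠ 0) :
    Set.Ioc (β / (2 * (j:ℝ) + 1)) (β / (2 * (j:ℝ) - 1)) ⊆ Set.Ioc (-p) p := by
  rintro u ⟨hu1, hu2⟩
  rcases aux_case hj with h | h
  · have h1 : 0 < β / (2 * (j:ℝ) + 1) := div_pos hβ (by nlinarith)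
    have h2 : β / (2 * (j:ℝ) - 1) ≤ β / 1 :=
      aux_div_le hβ (by nlinarith) (by nlinarith)
    rw [div_one] at h2
    exact ⟨by nlinarith, by linarith⟩
  · have h1 : β / (2 * (j:ℝ) - 1) < 0 := div_neg_of_pos_of_neg hβ (by nlinarith)
    have h2 : β / (-1:ℝ) ≤ β / (2 * (j:ℝ) + 1) :=
      aux_div_le hβ (by nlinarith) (by nlinarith)
    rw [div_neg, div_one] at h2
    exact ⟨by linarith, by nlinarith⟩

lemma keyDisj (p β : ℝ) (hp : 0 < p) (hβ : 0 < β) {j k : ℤ} (hj : j ≠ 0) (hk : k ≠ 0)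
    (hjk : j ≠ k) :
    Disjoint (Set.Ioc (β / (2 * (j:ℝ) + 1)) (β / (2 * (j:ℝ) - 1)))
      (Set.Ioc (β / (2 * (k:ℝ) + 1)) (β / (2 * (k:ℝ) - 1))) := by
  have hpβ : p * β ≠ 0 := (mul_pos hp hβ).ne'
  rw [Set.disjoint_left]
  intro u huj huk
  rw [← keyImage p β hp hβ j hj] at huj
  rw [← keyImage p β hp hβ k hk] at huk
  obtain ⟨x, hx, hxu⟩ := huj
  obtain ⟨y, hy, hyu⟩ := huk
  have htx : 2 * p * (j:ℝ) - x ≠ 0 := aux_tne hp hj hx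
  have hty : 2 * p * (k:ℝ) - y ≠ 0 := aux_tne hp hk hy
  simp only at hxu hyu
  have hu0 : u ≠ 0 := by rw [← hxu]; exact div_ne_zero hpβ htx
  have htxe : 2 * p * (j:ℝ) - x = p * β / u := by
    rw [← hxu]; field_simp
  have htye : 2 * p * (k:ℝ) - y = p * β / u := by
    rw [← hyu]; field_simp
  have hd1 : (-1:ℝ) < (j:ℝ) - (k:ℝ) := by nlinarith [hx.1, hx.2, hy.1, hy.2]
  have hd2 : ((j:ℝ) - (k:ℝ)) < 1 := by nlinarith [hx.1, hx.2, hy.1, hy.2]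
  have hd1' : (-1:ℤ) < j - k := by exact_mod_cast (by push_cast; linarith : ((-1:ℤ):ℝ) < ((j - k : ℤ):ℝ))
  have hd2' : j - k < 1 := by exact_mod_cast (by push_cast; linarith : ((j - k : ℤ):ℝ) < ((1:ℤ):ℝ))
  omega

lemma keyCOV (p β : ℝ) (hp : 0 < p) (hβ : 0 < β) (j : ℤ) (hj : j ≠ 0) (f : ℝ → ℂ)
    (hf : IntegrableOn f (Set.Ioc (-p) p) volume) (hβp : β ≤ p) :
    IntegrableOn (fun x => ((p * β / (2 * p * (j:ℝ) - x) ^ 2 : ℝ) : ℂ) *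
        f (p * β / (2 * p * (j:ℝ) - x))) (Set.Ioc (-p) p) volume ∧
      ∫ x in Set.Ioc (-p) p, ‖((p * β / (2 * p * (j:ℝ) - x) ^ 2 : ℝ) : ℂ) *
          f (p * β / (2 * p * (j:ℝ) - x))‖
        = ∫ u in Set.Ioc (β / (2 * (j:ℝ) + 1)) (β / (2 * (j:ℝ) - 1)), ‖f u‖ := by
  have hpβ : (0:ℝ) < p * β := mul_pos hp hβ
  set S := Set.Ioc (-p) p with hS
  have hderiv : ∀ x ∈ S, HasDerivWithinAt (fun x => p * β / (2 * p * (j:ℝ) - x))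
      (p * β / (2 * p * (j:ℝ) - x) ^ 2) S x := by
    intro x hx
    have ht : 2 * p * (j:ℝ) - x ≠ 0 := aux_tne hp hj hx
    have d1 : HasDerivAt (fun y => 2 * p * (j:ℝ) - y) (-1) x := by
      simpa using (hasDerivAt_id x).const_sub (2 * p * (j:ℝ))
    have d2 := (d1.inv ht).const_mul (p * β)
    have heq : p * β * (-(-1) / (2 * p * (j:ℝ) - x) ^ 2) = p * β / (2 * p * (j:ℝ) - x) ^ 2 := by
      ring
    rw [heq] at d2
    have : (fun y => p * β * (2 * p * (j:ℝ) - y)⁻¹) = fun y => p * β / (2 * p * (j:ℝ) - y) := by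
      funext y; rw [div_eq_mul_inv]
    have d2 : HasDerivAt (fun y => p * β * (2 * p * (j:ℝ) - y)⁻¹) (p * β / (2 * p * (j:ℝ) - x) ^ 2) x := d2
    rw [this] at d2
    exact d2.hasDerivWithinAt
  have hinj : Set.InjOn (fun x => p * β / (2 * p * (j:ℝ) - x)) S := by
    intro x hx y hy h
    have htx : 2 * p * (j:ℝ) - x ≠ 0 := aux_tne hp hj hx
    have hty : 2 * p * (j:ℝ) - y ≠ 0 := aux_tne hp hj hy
    simp only at h
    rw [div_eq_div_iff htx hty] at h
    have := mul_left_cancel₀ hpβ.ne' h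
    linarith
  have habs : ∀ x : ℝ, |p * β / (2 * p * (j:ℝ) - x) ^ 2| = p * β / (2 * p * (j:ℝ) - x) ^ 2 := by
    intro x
    exact abs_of_nonneg (div_nonneg hpβ.le (sq_nonneg _))
  have himg := keyImage p β hp hβ j hj
  have hIsub := keyIsubS p β hp hβ hβp j hj
  have hintI : IntegrableOn f (Set.Ioc (β / (2 * (j:ℝ) + 1)) (β / (2 * (j:ℝ) - 1))) volume :=
    hf.mono_set hIsub
  constructor
  · have hiff := integrableOn_image_iff_integrableOn_abs_deriv_smul measurableSet_Ioc hderiv hinj f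
    rw [himg] at hiff
    refine (hiff.mp hintI).congr (Filter.Eventually.of_forall fun x => ?_)
    simp only
    rw [habs, Complex.real_smul]
  · have heq := integral_image_eq_integral_abs_deriv_smul measurableSet_Ioc hderiv hinj
      (fun u => ‖f u‖)
    rw [himg] at heq
    rw [heq]
    refine integral_congr_ae (Filter.Eventually.of_forall fun x => ?_)
    simp only [norm_mul, Complex.norm_real, smul_eq_mul]
    rw [Real.norm_eq_abs, habs]


/-- For `0 < β ≤ p`, the Perron–Frobenius operator
`P_β[f](x) = ∑_{j ≠ 0} (pβ/(2pj - x)²) f(pβ/(2pj - x))` maps `L¹((-p,p])` to itself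
and is a norm contraction. -/
theorem stmt8 (p β : ℝ) (hp : 0 < p) (hβ : 0 < β) (hβp : β ≤ p)
    (f : ℝ → ℂ)
    (hf : Integrable f (volume.restrict (Set.Ioc (-p) p))) :
    Integrable
      (fun x => ∑' j : {j : ℤ // j ≠ 0},
        ((p * β / (2 * p * ((j : ℤ) : ℝ) - x) ^ 2 : ℝ) : ℂ) *
          f (p * β / (2 * p * ((j : ℤ) : ℝ) - x)))
      (volume.restrict (Set.Ioc (-p) p)) ∧
    ∫ x in Set.Ioc (-p) p,
        ‖∑' j : {j : ℤ // j ≠ 0},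
          ((p * β / (2 * p * ((j : ℤ) : ℝ) - x) ^ 2 : ℝ) : ℂ) *
            f (p * β / (2 * p * ((j : ℤ) : ℝ) - x))‖
      ≤ ∫ x in Set.Ioc (-p) p, ‖f x‖ := by
  classical
  set μ := volume.restrict (Set.Ioc (-p) p) with hμ
  set g : {j : ℤ // j ≠ 0} → ℝ → ℂ := fun j x =>
    ((p * β / (2 * p * ((j : ℤ) : ℝ) - x) ^ 2 : ℝ) : ℂ) *
      f (p * β / (2 * p * ((j : ℤ) : ℝ) - x)) with hgdef
  have hfS : IntegrableOn f (Set.Ioc (-p) p) volume := hf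
  have hkey : ∀ j : {j : ℤ // j ≠ 0}, Integrable (g j) μ ∧
      ∫ x in Set.Ioc (-p) p, ‖g j x‖
        = ∫ u in Set.Ioc (β / (2 * ((j:ℤ):ℝ) + 1)) (β / (2 * ((j:ℤ):ℝ) - 1)), ‖f u‖ :=
    fun j => keyCOV p β hp hβ j.1 j.2 f hfS hβp
  have hgint : ∀ j, Integrable (g j) μ := fun j => (hkey j).1
  have hgmeas : ∀ j, AEStronglyMeasurable (g j) μ := fun j => (hgint j).1
  have hFnonneg : ∀ j : {j : ℤ // j ≠ 0}, 0 ≤ ∫ x in Set.Ioc (-p) p, ‖g j x‖ :=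
    fun j => integral_nonneg fun x => norm_nonneg _
  have hfnormS : IntegrableOn (fun x => ‖f x‖) (Set.Ioc (-p) p) volume := hfS.norm
  have hbound : ∀ s : Finset {j : ℤ // j ≠ 0},
      ∑ j ∈ s, (∫ x in Set.Ioc (-p) p, ‖g j x‖) ≤ ∫ x in Set.Ioc (-p) p, ‖f x‖ := by
    intro s
    have h1 : ∑ j ∈ s, (∫ x in Set.Ioc (-p) p, ‖g j x‖)
        = ∑ j ∈ s, ∫ u in Set.Ioc (β / (2 * ((j:ℤ):ℝ) + 1)) (β / (2 * ((j:ℤ):ℝ) - 1)), ‖f u‖ :=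
      Finset.sum_congr rfl fun j _ => (hkey j).2
    rw [h1]
    have h2 : ∑ j ∈ s, ∫ u in Set.Ioc (β / (2 * ((j:ℤ):ℝ) + 1)) (β / (2 * ((j:ℤ):ℝ) - 1)), ‖f u‖
        = ∫ u in ⋃ j ∈ s, Set.Ioc (β / (2 * ((j:ℤ):ℝ) + 1)) (β / (2 * ((j:ℤ):ℝ) - 1)), ‖f u‖ :=
      (integral_biUnion_finset s (fun j _ => measurableSet_Ioc)
        (fun j _ k _ hjk => keyDisj p β hp hβ j.2 k.2 fun h => hjk (Subtype.ext h))
        (fun j _ => hfnormS.mono_set (keyIsubS p β hp hβ hβp j.1 j.2))).symm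
    rw [h2]
    refine setIntegral_mono_set hfnormS
      (Filter.Eventually.of_forall fun x => norm_nonneg _)
      (HasSubset.Subset.eventuallyLE ?_)
    exact Set.iUnion₂_subset fun j _ => keyIsubS p β hp hβ hβp j.1 j.2
  have hsummable : Summable (fun j : {j : ℤ // j ≠ 0} => ∫ x in Set.Ioc (-p) p, ‖g j x‖) :=
    summable_of_sum_le hFnonneg hbound
  have htsumle : ∑' j : {j : ℤ // j ≠ 0}, (∫ x in Set.Ioc (-p) p, ‖g j x‖)
      ≤ ∫ x in Set.Ioc (-p) p, ‖f x‖ := Summable.tsum_le_of_sum_le hsummable hbound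
  have hlintnorm : ∀ j : {j : ℤ // j ≠ 0},
      ∫⁻ x, ‖g j x‖₊ ∂μ = ENNReal.ofReal (∫ x in Set.Ioc (-p) p, ‖g j x‖) :=
    fun j => (ofReal_integral_norm_eq_lintegral_enorm (hgint j)).symm
  have hlintsum : ∑' j : {j : ℤ // j ≠ 0}, ∫⁻ x, ‖g j x‖₊ ∂μ ≠ ∞ := by
    simp_rw [hlintnorm]
    rw [← ENNReal.ofReal_tsum_of_nonneg hFnonneg hsummable]
    exact ENNReal.ofReal_ne_top
  have haemeas : ∀ j : {j : ℤ // j ≠ 0}, AEMeasurable (fun x => (‖g j x‖₊ : ℝ≥0∞)) μ :=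
    fun j => (hgmeas j).enorm
  have haesum : ∀ᵐ x ∂μ, Summable fun j : {j : ℤ // j ≠ 0} => ‖g j x‖ := by
    have h1 : ∫⁻ x, ∑' j : {j : ℤ // j ≠ 0}, (‖g j x‖₊ : ℝ≥0∞) ∂μ ≠ ∞ := by
      rw [lintegral_tsum haemeas]; exact hlintsum
    refine (ae_lt_top' (AEMeasurable.ennreal_tsum haemeas) h1).mono fun x hx => ?_
    have h2 := ENNReal.tsum_coe_ne_top_iff_summable_coe.mp hx.ne
    simpa [coe_nnnorm] using h2
  have hGmeas : AEStronglyMeasurable (fun x => ∑' j : {j : ℤ // j ≠ 0}, ‖g j x‖) μ := by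
    simp_rw [← coe_nnnorm, ← NNReal.coe_tsum]
    rw [aestronglyMeasurable_iff_aemeasurable]
    exact (AEMeasurable.nnreal_tsum fun j => (hgmeas j).nnnorm.aemeasurable).coe_nnreal_real
  have hGint : Integrable (fun x => ∑' j : {j : ℤ // j ≠ 0}, ‖g j x‖) μ := by
    refine ⟨hGmeas, ?_⟩
    show (∫⁻ x, (‖∑' j : {j : ℤ // j ≠ 0}, ‖g j x‖‖₊ : ℝ≥0∞) ∂μ) < ⊤
    have h3 : ∫⁻ x, ∑' j : {j : ℤ // j ≠ 0}, (‖g j x‖₊ : ℝ≥0∞) ∂μ < ⊤ := by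
      rw [lintegral_tsum haemeas]; exact hlintsum.lt_top
    convert h3 using 1
    apply lintegral_congr_ae
    filter_upwards [haesum] with x hx
    have hx' : Summable fun j : {j : ℤ // j ≠ 0} => ‖g j x‖₊ := by
      rw [← NNReal.summable_coe]
      simpa [coe_nnnorm] using hx
    have : ‖∑' j : {j : ℤ // j ≠ 0}, ‖g j x‖‖₊ = ∑' j : {j : ℤ // j ≠ 0}, ‖g j x‖₊ := by
      simp_rw [← coe_nnnorm, ← NNReal.coe_tsum, NNReal.nnnorm_eq]
    rw [this, ENNReal.coe_tsum hx']
  have haetend : ∀ᵐ x ∂μ, Filter.Tendsto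
      (fun s : Finset {j : ℤ // j ≠ 0} => ∑ j ∈ s, g j x) Filter.atTop
      (𝓝 (∑' j : {j : ℤ // j ≠ 0}, g j x)) := by
    filter_upwards [haesum] with x hx
    exact hx.of_norm.hasSum
  have hmeasTsum : AEStronglyMeasurable (fun x => ∑' j : {j : ℤ // j ≠ 0}, g j x) μ :=
    aestronglyMeasurable_of_tendsto_ae Filter.atTop
      (fun s => s.aestronglyMeasurable_fun_sum fun j _ => hgmeas j) haetend
  have hnormbound : ∀ᵐ x ∂μ, ‖∑' j : {j : ℤ // j ≠ 0}, g j x‖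
      ≤ ∑' j : {j : ℤ // j ≠ 0}, ‖g j x‖ := by
    filter_upwards [haesum] with x hx
    exact norm_tsum_le_tsum_norm hx
  have hint : Integrable (fun x => ∑' j : {j : ℤ // j ≠ 0}, g j x) μ :=
    hGint.mono' hmeasTsum hnormbound
  have hle1 : ∫ x in Set.Ioc (-p) p, ‖∑' j : {j : ℤ // j ≠ 0}, g j x‖
      ≤ ∫ x in Set.Ioc (-p) p, ∑' j : {j : ℤ // j ≠ 0}, ‖g j x‖ :=
    integral_mono_ae hint.norm hGint hnormbound
  have heq2 : ∫ x in Set.Ioc (-p) p, ∑' j : {j : ℤ // j ≠ 0}, ‖g j x‖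
      = ∑' j : {j : ℤ // j ≠ 0}, ∫ x in Set.Ioc (-p) p, ‖g j x‖ := by
    refine integral_tsum (fun j => (hgmeas j).norm) ?_
    simp only [enorm_norm]
    exact hlintsum
  exact ⟨hint, by linarith [hle1, heq2 ▸ hle1]⟩
end
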